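/- Fix positive integers M, N, K, row supports ρ(k) ⊆ {1,…,M} and column supports γ(k) ⊆ {1,…,N}, positive weights λ₁,…,λ_K, ranks R₁,…,R_K, and a real M×N matrix X. For τ² > 0 let φ(x; τ²) = (2πτ²)^{-1/2} exp(−x²/(2τ²)) denote the centered Gaussian density. Define the joint density p(X, U, V) of the Bayesian model with unit-variance Gaussian errors and Gaussian priors with variance τₖ² = 1/λₖ on the free factor entries: p(X,U,V) = [∏_{m=1}^{M} ∏_{n=1}^{N} φ(X[m,n] − (∑ₖ U⁽ᵏ⁾V⁽ᵏ⁾ᵀ)[m,n]; 1)] · [∏ₖ ∏_{m ∈ ρ(k)} ∏_{r=1}^{Rₖ} φ(U⁽ᵏ⁾[m,r]; 1/λₖ)] · [∏ₖ ∏_{n ∈ γ(k)} ∏_{r=1}^{Rₖ} φ(V⁽ᵏ⁾[n,r]; 1/λₖ)], evaluated at factorizations (U,V) in which the m-th row of U⁽ᵏ⁾ is zero for m ∉ ρ(k) and the n-th row of V⁽ᵏ⁾ is zero for n ∉ γ(k). Then there is a constant C > 0, depending only on M, N, K, the supports, the ranks, and the weights (not on X, U, V), such that for all X and all such factorizations,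 p(X, U, V) = C · exp(−½[‖X − ∑ₖ U⁽ᵏ⁾V⁽ᵏ⁾ᵀ‖_F² + ∑ₖ λₖ(‖U⁽ᵏ⁾‖_F² + ‖V⁽ᵏ⁾‖_F²)]). Consequently, for fixed X, maximizing p over (U,V) is equivalent to minimizing the penalized factorization objective L(U,V) = ‖X − ∑ₖ U⁽ᵏ⁾V⁽ᵏ⁾ᵀ‖_F² + ∑ₖ λₖ(‖U⁽ᵏ⁾‖_F² + ‖V⁽ᵏ⁾‖_F²). (Proposition 7: the BIDIFAC+ objective gives the mode of a Bayesian posterior.) -/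

import Mathlib

open Matrix BigOperators

/-- Squared Frobenius norm: sum of squared entries. -/
noncomputable def frobSq {M N : ℕ} (A : Matrix (Fin M) (Fin N) ℝ) : ℝ :=
  ∑ m, ∑ n, (A m n) ^ 2

/-- The centered Gaussian density with variance `t2`:
`φ(x; t2) = (2π t2)^{-1/2} exp(−x²/(2 t2))`. -/
noncomputable def gaussPdf (x t2 : ℝ) : ℝ :=
  (Real.sqrt (2 * Real.pi * t2))⁻¹ * Real.exp (-(x ^ 2) / (2 * t2))

/-- A factorization `(U, V)` with ranks `R k` is feasible if the `m`-th row of `U⁽ᵏ⁾`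
vanishes for `m ∉ ρ k` and the `n`-th row of `V⁽ᵏ⁾` vanishes for `n ∉ γ k`. -/
def FactorFeasible {M N K : ℕ} (ρ : Fin K → Finset (Fin M)) (γ : Fin K → Finset (Fin N))
    (R : Fin K → ℕ)
    (U : ∀ k, Matrix (Fin M) (Fin (R k)) ℝ)
    (V : ∀ k, Matrix (Fin N) (Fin (R k)) ℝ) : Prop :=
  (∀ k m, m ∉ ρ k → ∀ r, U k m r = 0) ∧ (∀ k n, n ∉ γ k → ∀ r, V k n r = 0)

/-- The penalized factorization objective
`L(U,V) = ‖X − ∑ₖ U⁽ᵏ⁾V⁽ᵏ⁾ᵀ‖_F² + ∑ₖ λₖ(‖U⁽ᵏ⁾‖_F² + ‖V⁽ᵏ⁾‖_F²)`. -/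
noncomputable def factorObj {M N K : ℕ} (X : Matrix (Fin M) (Fin N) ℝ)
    (lam : Fin K → ℝ) (R : Fin K → ℕ)
    (U : ∀ k, Matrix (Fin M) (Fin (R k)) ℝ)
    (V : ∀ k, Matrix (Fin N) (Fin (R k)) ℝ) : ℝ :=
  frobSq (X - ∑ k, U k * (V k)ᵀ) + ∑ k, lam k * (frobSq (U k) + frobSq (V k))

/-- The joint density of the Bayesian model: unit-variance Gaussian errors on every entry of
`X − ∑ₖ U⁽ᵏ⁾V⁽ᵏ⁾ᵀ`, and Gaussian priors with variance `τₖ² = 1/λₖ` on the free entries of the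
factors (those in the supports `ρ k` resp. `γ k`). -/
noncomputable def jointDensity {M N K : ℕ}
    (ρ : Fin K → Finset (Fin M)) (γ : Fin K → Finset (Fin N))
    (lam : Fin K → ℝ) (R : Fin K → ℕ)
    (X : Matrix (Fin M) (Fin N) ℝ)
    (U : ∀ k, Matrix (Fin M) (Fin (R k)) ℝ)
    (V : ∀ k, Matrix (Fin N) (Fin (R k)) ℝ) : ℝ :=
  (∏ m, ∏ n, gaussPdf ((X - ∑ k, U k * (V k)ᵀ) m n) 1)
    * (∏ k, ∏ m ∈ ρ k, ∏ r, gaussPdf (U k m r) (1 / lam k))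
    * (∏ k, ∏ n ∈ γ k, ∏ r, gaussPdf (V k n r) (1 / lam k))

lemma prodGauss {ι : Type*} (s : Finset ι) (f : ι → ℝ) (t2 : ℝ) :
    ∏ i ∈ s, gaussPdf (f i) t2
      = ((Real.sqrt (2 * Real.pi * t2))⁻¹) ^ s.card
        * Real.exp (∑ i ∈ s, -(f i ^ 2) / (2 * t2)) := by
  simp [gaussPdf, Finset.prod_mul_distrib, Real.exp_sum]

set_option maxHeartbeats 2000000 in
/-- Proposition 7: the joint density of the Bayesian model equals
`C · exp(−½ L(U,V))` for a positive constant `C` not depending on `X`, `U`, `V`;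
consequently, maximizing the posterior is equivalent to minimizing the penalized
factorization objective `L`. -/
theorem bidifac_bayesian_mode
    {M N K : ℕ} (hM : 0 < M) (hN : 0 < N) (hK : 0 < K)
    (ρ : Fin K → Finset (Fin M)) (γ : Fin K → Finset (Fin N))
    (lam : Fin K → ℝ) (hlam : ∀ k, 0 < lam k) (R : Fin K → ℕ) :
    ∃ C : ℝ, 0 < C ∧
      (∀ (X : Matrix (Fin M) (Fin N) ℝ)
        (U : ∀ k, Matrix (Fin M) (Fin (R k)) ℝ)
        (V : ∀ k, Matrix (Fin N) (Fin (R k)) ℝ),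
        FactorFeasible ρ γ R U V →
          jointDensity ρ γ lam R X U V
            = C * Real.exp (-(1 / 2) * factorObj X lam R U V)) ∧
      (∀ (X : Matrix (Fin M) (Fin N) ℝ)
        (U₁ : ∀ k, Matrix (Fin M) (Fin (R k)) ℝ)
        (V₁ : ∀ k, Matrix (Fin N) (Fin (R k)) ℝ)
        (U₂ : ∀ k, Matrix (Fin M) (Fin (R k)) ℝ)
        (V₂ : ∀ k, Matrix (Fin N) (Fin (R k)) ℝ),
        FactorFeasible ρ γ R U₁ V₁ → FactorFeasible ρ γ R U₂ V₂ →
          (jointDensity ρ γ lam R X U₁ V₁ ≤ jointDensity ρ γ lam R X U₂ V₂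
            ↔ factorObj X lam R U₂ V₂ ≤ factorObj X lam R U₁ V₁)) := by
  have hc1pos : (0:ℝ) < (Real.sqrt (2 * Real.pi * 1))⁻¹ := by
    have : (0:ℝ) < 2 * Real.pi * 1 := by positivity
    positivity
  have hcUpos : ∀ k : Fin K, (0:ℝ) < ((Real.sqrt (2 * Real.pi * (1 / lam k)))⁻¹) ^ (R k) := by
    intro k
    have h1 : (0:ℝ) < 1 / lam k := one_div_pos.mpr (hlam k)
    have : (0:ℝ) < 2 * Real.pi * (1 / lam k) := by positivity
    positivity
  have key : ∀ (X : Matrix (Fin M) (Fin N) ℝ)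
      (U : ∀ k, Matrix (Fin M) (Fin (R k)) ℝ)
      (V : ∀ k, Matrix (Fin N) (Fin (R k)) ℝ),
      FactorFeasible ρ γ R U V →
        jointDensity ρ γ lam R X U V
          = (((Real.sqrt (2 * Real.pi * 1))⁻¹ ^ N) ^ M
              * (∏ k, (((Real.sqrt (2 * Real.pi * (1 / lam k)))⁻¹) ^ (R k)) ^ (ρ k).card)
              * (∏ k, (((Real.sqrt (2 * Real.pi * (1 / lam k)))⁻¹) ^ (R k)) ^ (γ k).card))
            * Real.exp (-(1 / 2) * factorObj X lam R U V) := by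
    rintro X U V ⟨hU, hV⟩
    set E := X - ∑ k, U k * (V k)ᵀ with hE
    have hA : (∏ m, ∏ n, gaussPdf (E m n) 1)
        = ((Real.sqrt (2 * Real.pi * 1))⁻¹ ^ N) ^ M
          * Real.exp (∑ m, ∑ n, -(E m n ^ 2) / (2 * 1)) := by
      calc (∏ m, ∏ n, gaussPdf (E m n) 1)
          = ∏ m, ((Real.sqrt (2 * Real.pi * 1))⁻¹ ^ N
              * Real.exp (∑ n, -(E m n ^ 2) / (2 * 1))) := by
            refine Finset.prod_congr rfl fun m _ => ?_
            simpa only [Finset.card_univ, Fintype.card_fin]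
              using prodGauss Finset.univ (fun n => E m n) 1
        _ = _ := by
            simp [Finset.prod_mul_distrib, Real.exp_sum]
    have hB : (∏ k, ∏ m ∈ ρ k, ∏ r, gaussPdf (U k m r) (1 / lam k))
        = (∏ k, (((Real.sqrt (2 * Real.pi * (1 / lam k)))⁻¹) ^ (R k)) ^ (ρ k).card)
          * Real.exp (∑ k, ∑ m ∈ ρ k, ∑ r, -(U k m r ^ 2) / (2 * (1 / lam k))) := by
      calc (∏ k, ∏ m ∈ ρ k, ∏ r, gaussPdf (U k m r) (1 / lam k))
          = ∏ k, ((((Real.sqrt (2 * Real.pi * (1 / lam k)))⁻¹) ^ (R k)) ^ (ρ k).card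
              * Real.exp (∑ m ∈ ρ k, ∑ r, -(U k m r ^ 2) / (2 * (1 / lam k)))) := by
            refine Finset.prod_congr rfl fun k _ => ?_
            calc (∏ m ∈ ρ k, ∏ r, gaussPdf (U k m r) (1 / lam k))
                = ∏ m ∈ ρ k, (((Real.sqrt (2 * Real.pi * (1 / lam k)))⁻¹) ^ (R k)
                    * Real.exp (∑ r, -(U k m r ^ 2) / (2 * (1 / lam k)))) := by
                  refine Finset.prod_congr rfl fun m _ => ?_
                  simpa only [Finset.card_univ, Fintype.card_fin]
                    using prodGauss Finset.univ (fun r => U k m r) (1 / lam k)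
              _ = _ := by simp [Finset.prod_mul_distrib, Real.exp_sum]
        _ = _ := by simp [Finset.prod_mul_distrib, Real.exp_sum]
    have hC : (∏ k, ∏ n ∈ γ k, ∏ r, gaussPdf (V k n r) (1 / lam k))
        = (∏ k, (((Real.sqrt (2 * Real.pi * (1 / lam k)))⁻¹) ^ (R k)) ^ (γ k).card)
          * Real.exp (∑ k, ∑ n ∈ γ k, ∑ r, -(V k n r ^ 2) / (2 * (1 / lam k))) := by
      calc (∏ k, ∏ n ∈ γ k, ∏ r, gaussPdf (V k n r) (1 / lam k))
          = ∏ k, ((((Real.sqrt (2 * Real.pi * (1 / lam k)))⁻¹) ^ (R k)) ^ (γ k).card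
              * Real.exp (∑ n ∈ γ k, ∑ r, -(V k n r ^ 2) / (2 * (1 / lam k)))) := by
            refine Finset.prod_congr rfl fun k _ => ?_
            calc (∏ n ∈ γ k, ∏ r, gaussPdf (V k n r) (1 / lam k))
                = ∏ n ∈ γ k, (((Real.sqrt (2 * Real.pi * (1 / lam k)))⁻¹) ^ (R k)
                    * Real.exp (∑ r, -(V k n r ^ 2) / (2 * (1 / lam k)))) := by
                  refine Finset.prod_congr rfl fun n _ => ?_
                  simpa only [Finset.card_univ, Fintype.card_fin]
                    using prodGauss Finset.univ (fun r => V k n r) (1 / lam k)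
              _ = _ := by simp [Finset.prod_mul_distrib, Real.exp_sum]
        _ = _ := by simp [Finset.prod_mul_distrib, Real.exp_sum]
    have hS0 : (∑ m, ∑ n, -(E m n ^ 2) / (2 * 1)) = -(1 / 2) * frobSq E := by
      rw [frobSq, Finset.mul_sum]
      refine Finset.sum_congr rfl fun m _ => ?_
      rw [Finset.mul_sum]
      exact Finset.sum_congr rfl fun n _ => by ring
    have hSU : ∀ k, (∑ m ∈ ρ k, ∑ r, -(U k m r ^ 2) / (2 * (1 / lam k)))
        = -(1 / 2) * (lam k * frobSq (U k)) := by
      intro k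
      have hsub : (∑ m ∈ ρ k, ∑ r, -(U k m r ^ 2) / (2 * (1 / lam k)))
          = ∑ m, ∑ r, -(U k m r ^ 2) / (2 * (1 / lam k)) := by
        refine Finset.sum_subset (Finset.subset_univ _) fun m _ hm => ?_
        simp [hU k m hm]
      rw [hsub, frobSq, Finset.mul_sum, Finset.mul_sum]
      refine Finset.sum_congr rfl fun m _ => ?_
      rw [Finset.mul_sum, Finset.mul_sum]
      refine Finset.sum_congr rfl fun r _ => ?_
      have := (hlam k).ne'
      field_simp
    have hSV : ∀ k, (∑ n ∈ γ k, ∑ r, -(V k n r ^ 2) / (2 * (1 / lam k)))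
        = -(1 / 2) * (lam k * frobSq (V k)) := by
      intro k
      have hsub : (∑ n ∈ γ k, ∑ r, -(V k n r ^ 2) / (2 * (1 / lam k)))
          = ∑ n, ∑ r, -(V k n r ^ 2) / (2 * (1 / lam k)) := by
        refine Finset.sum_subset (Finset.subset_univ _) fun n _ hn => ?_
        simp [hV k n hn]
      rw [hsub, frobSq, Finset.mul_sum, Finset.mul_sum]
      refine Finset.sum_congr rfl fun n _ => ?_
      rw [Finset.mul_sum, Finset.mul_sum]
      refine Finset.sum_congr rfl fun r _ => ?_
      have := (hlam k).ne'
      field_simp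
    have hExp : (∑ m, ∑ n, -(E m n ^ 2) / (2 * 1))
        + (∑ k, ∑ m ∈ ρ k, ∑ r, -(U k m r ^ 2) / (2 * (1 / lam k)))
        + (∑ k, ∑ n ∈ γ k, ∑ r, -(V k n r ^ 2) / (2 * (1 / lam k)))
        = -(1 / 2) * factorObj X lam R U V := by
      rw [hS0, Finset.sum_congr rfl (fun k _ => hSU k),
        Finset.sum_congr rfl (fun k _ => hSV k), factorObj, ← hE]
      rw [← Finset.mul_sum, ← Finset.mul_sum]
      have hsplit : ∑ k, lam k * (frobSq (U k) + frobSq (V k))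
          = (∑ k, lam k * frobSq (U k)) + ∑ k, lam k * frobSq (V k) := by
        rw [← Finset.sum_add_distrib]
        exact Finset.sum_congr rfl fun k _ => by ring
      rw [hsplit]
      ring
    rw [jointDensity, ← hE, hA, hB, hC, ← hExp]
    rw [Real.exp_add, Real.exp_add]
    ring
  refine ⟨_, ?_, key, ?_⟩
  · have h1 : (0:ℝ) < ∏ k, (((Real.sqrt (2 * Real.pi * (1 / lam k)))⁻¹) ^ (R k)) ^ (ρ k).card :=
      Finset.prod_pos fun k _ => pow_pos (hcUpos k) _
    have h2 : (0:ℝ) < ∏ k, (((Real.sqrt (2 * Real.pi * (1 / lam k)))⁻¹) ^ (R k)) ^ (γ k).card :=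
      Finset.prod_pos fun k _ => pow_pos (hcUpos k) _
    positivity
  · intro X U₁ V₁ U₂ V₂ h₁ h₂
    rw [key X U₁ V₁ h₁, key X U₂ V₂ h₂]
    have hCpos : (0:ℝ) < ((Real.sqrt (2 * Real.pi * 1))⁻¹ ^ N) ^ M
        * (∏ k, (((Real.sqrt (2 * Real.pi * (1 / lam k)))⁻¹) ^ (R k)) ^ (ρ k).card)
        * (∏ k, (((Real.sqrt (2 * Real.pi * (1 / lam k)))⁻¹) ^ (R k)) ^ (γ k).card) := by
      have h1 : (0:ℝ) < ∏ k, (((Real.sqrt (2 * Real.pi * (1 / lam k)))⁻¹) ^ (R k)) ^ (ρ k).card :=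
        Finset.prod_pos fun k _ => pow_pos (hcUpos k) _
      have h2 : (0:ℝ) < ∏ k, (((Real.sqrt (2 * Real.pi * (1 / lam k)))⁻¹) ^ (R k)) ^ (γ k).card :=
        Finset.prod_pos fun k _ => pow_pos (hcUpos k) _
      positivity
    rw [mul_le_mul_iff_right₀ hCpos, Real.exp_le_exp]
    constructor <;> intro h <;> nlinarith
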